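/- The map Φ̃ ramifies along Σ: in the affine chart b₀ = 1, write f(b₁, b₂) = (b₁t − b₂)/(t − b₁) and g(b₁, b₂) = −b₁(λ − b₁λ − b₁ + b₂)/(b₁² − b₂) for the two coordinates of Φ̃(1 : b₁ : b₂). Then for every (b₁, b₂) ∈ ℂ² with (t − b₁)(b₁² − b₂) ≠ 0 and Σ(1, b₁, b₂) = 0, the Jacobian determinant ∂f/∂b₁ · ∂g/∂b₂ − ∂f/∂b₂ · ∂g/∂b₁ vanishes at (b₁, b₂). -/

import Mathlib

/-- The cubic `Σ ⊂ ℙ²(ℂ)`, ramification locus of `Φ̃`. -/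
noncomputable def SigmaCubic (l t b₀ b₁ b₂ : ℂ) : ℂ :=
  -(l * t ^ 2) * b₀ ^ 2 * b₁ + l * t * b₀ ^ 2 * b₂
    + (l * t ^ 2 + l * t + t ^ 2) * b₀ * b₁ ^ 2 - (t ^ 2 + l) * b₁ ^ 3
    - 2 * (l * t + t) * b₀ * b₁ * b₂ + (l + t + 1) * b₁ ^ 2 * b₂
    + t * b₀ * b₂ ^ 2 - b₁ * b₂ ^ 2

/-- First coordinate of `Φ̃` in the affine chart `b₀ = 1`. -/
noncomputable def fChart (t b₁ b₂ : ℂ) : ℂ := (b₁ * t - b₂) / (t - b₁)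

/-- Second coordinate of `Φ̃` in the affine chart `b₀ = 1`. -/
noncomputable def gChart (l b₁ b₂ : ℂ) : ℂ :=
  -b₁ * (l - b₁ * l - b₁ + b₂) / (b₁ ^ 2 - b₂)

/-- The map `Φ̃` ramifies along `Σ`: in the affine chart `b₀ = 1`, with
`f(b₁, b₂) = (b₁t − b₂)/(t − b₁)` and `g(b₁, b₂) = −b₁(λ − b₁λ − b₁ + b₂)/(b₁² − b₂)` the
two coordinates of `Φ̃(1 : b₁ : b₂)`, for every `(b₁, b₂) ∈ ℂ²` with
`(t − b₁)(b₁² − b₂) ≠ 0` and `Σ(1, b₁, b₂) = 0`, the Jacobian determinant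
`∂f/∂b₁ · ∂g/∂b₂ − ∂f/∂b₂ · ∂g/∂b₁` vanishes at `(b₁, b₂)`. -/
theorem jacobian_vanishes_on_sigma (l t : ℂ) (hl0 : l ≠ 0) (hl1 : l ≠ 1)
    (ht0 : t ≠ 0) (ht1 : t ≠ 1) (htl : t ≠ l)
    (b₁ b₂ : ℂ) (h : (t - b₁) * (b₁ ^ 2 - b₂) ≠ 0)
    (hS : SigmaCubic l t 1 b₁ b₂ = 0) :
    deriv (fun x => fChart t x b₂) b₁ * deriv (fun x => gChart l b₁ x) b₂ -
        deriv (fun x => fChart t b₁ x) b₂ * deriv (fun x => gChart l x b₂) b₁ = 0 := by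
  have h1 : t - b₁ ≠ 0 := fun hh => h (by rw [hh]; ring)
  have h2 : b₁ ^ 2 - b₂ ≠ 0 := fun hh => h (by rw [hh]; ring)
  have hf1 : HasDerivAt (fun x => fChart t x b₂)
      (((1 * t - 0) * (t - b₁) - (b₁ * t - b₂) * (0 - 1)) / (t - b₁) ^ 2) b₁ := by
    simpa [fChart] using HasDerivAt.fun_div (((hasDerivAt_id b₁).mul_const t).sub_const b₂)
      ((hasDerivAt_const b₁ t).fun_sub (hasDerivAt_id b₁)) h1
  have hf2 : HasDerivAt (fun x => fChart t b₁ x)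
      (((0 - 1) * (t - b₁) - (b₁ * t - b₂) * 0) / (t - b₁) ^ 2) b₂ := by
    simpa [fChart] using HasDerivAt.fun_div ((hasDerivAt_const b₂ (b₁ * t)).fun_sub (hasDerivAt_id b₂))
      (hasDerivAt_const b₂ (t - b₁)) h1
  have hg2 : HasDerivAt (fun x => gChart l b₁ x)
      (((0 + -b₁ * 1) * (b₁ ^ 2 - b₂) - (-b₁ * (l - b₁ * l - b₁ + b₂)) * (0 - 1))
        / (b₁ ^ 2 - b₂) ^ 2) b₂ := by
    have : HasDerivAt (fun x : ℂ => -b₁ * (l - b₁ * l - b₁ + x)) (0 + -b₁ * 1) b₂ := by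
      simpa using ((hasDerivAt_const b₂ (l - b₁ * l - b₁)).add (hasDerivAt_id b₂)).const_mul (-b₁)
    simpa [gChart] using this.fun_div ((hasDerivAt_const b₂ (b₁ ^ 2)).fun_sub (hasDerivAt_id b₂)) h2
  have hg1 : HasDerivAt (fun x => gChart l x b₂)
      (((-1 * (l - b₁ * l - b₁ + b₂) + -b₁ * (0 - (1 * l) - 1 + 0)) * (b₁ ^ 2 - b₂)
          - (-b₁ * (l - b₁ * l - b₁ + b₂)) * (2 * b₁ ^ 1 - 0)) / (b₁ ^ 2 - b₂) ^ 2) b₁ := by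
    have hN : HasDerivAt (fun x : ℂ => -x * (l - x * l - x + b₂))
        (-1 * (l - b₁ * l - b₁ + b₂) + -b₁ * (0 - (1 * l) - 1 + 0)) b₁ := by
      simpa using ((hasDerivAt_id b₁).fun_neg.fun_mul
        ((((hasDerivAt_const b₁ l).fun_sub ((hasDerivAt_id b₁).mul_const l)).fun_sub
          (hasDerivAt_id b₁)).add_const b₂))
    have hD : HasDerivAt (fun x : ℂ => x ^ 2 - b₂) (2 * b₁ ^ 1 - 0) b₁ :=
      (hasDerivAt_pow 2 b₁).sub_const b₂ |>.congr_deriv (by norm_num)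
    simpa [gChart] using hN.fun_div hD h2
  rw [hf1.deriv, hf2.deriv, hg2.deriv, hg1.deriv]
  have hS' : -(l * t ^ 2) * 1 ^ 2 * b₁ + l * t * 1 ^ 2 * b₂
      + (l * t ^ 2 + l * t + t ^ 2) * 1 * b₁ ^ 2 - (t ^ 2 + l) * b₁ ^ 3
      - 2 * (l * t + t) * 1 * b₁ * b₂ + (l + t + 1) * b₁ ^ 2 * b₂
      + t * 1 * b₂ ^ 2 - b₁ * b₂ ^ 2 = 0 := hS
  have key : ((1 * t - 0) * (t - b₁) - (b₁ * t - b₂) * (0 - 1)) / (t - b₁) ^ 2 *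
      (((0 + -b₁ * 1) * (b₁ ^ 2 - b₂) - -b₁ * (l - b₁ * l - b₁ + b₂) * (0 - 1)) / (b₁ ^ 2 - b₂) ^ 2)
      - ((0 - 1) * (t - b₁) - (b₁ * t - b₂) * 0) / (t - b₁) ^ 2 *
      (((-1 * (l - b₁ * l - b₁ + b₂) + -b₁ * (0 - 1 * l - 1 + 0)) * (b₁ ^ 2 - b₂) -
        -b₁ * (l - b₁ * l - b₁ + b₂) * (2 * b₁ ^ 1 - 0)) / (b₁ ^ 2 - b₂) ^ 2)
      = SigmaCubic l t 1 b₁ b₂ / ((t - b₁) ^ 2 * (b₁ ^ 2 - b₂) ^ 2) := by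
    rw [SigmaCubic]
    field_simp
    ring
  rw [key, hS, zero_div]
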